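/- Let G ≤ AGL_1(q) be a primitive subgroup containing the translation group T, with point stabiliser S ≤ F_q^* of order n, and let x be a generator of the cyclic group S. Then for every y ∈ G \ S, the pair {x, y} generates G. -/
import Mathlib

open MulAction

/-- A group action is primitive if it is transitive and all its blocks are trivial. -/
def IsPrimitiveAction (G X : Type*) [Group G] [MulAction G X] : Prop :=
  MulAction.IsPretransitive G X ∧
    ∀ B : Set X, MulAction.IsBlock G B → B.Subsingleton ∨ B = Set.univ

/-- Let `G ≤ AGL₁(q)` be primitive on `F_q` and contain all translations, with (cyclic)
point stabiliser `S` of `0` generated by `x`.  Then for every `y ∈ G \ S`, the pair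
`{x, y}` generates `G`. -/
theorem stmt14 (p d : ℕ) (hp : p.Prime) (hd : 0 < d)
    (F : Type*) [Field F] [Fintype F] (hF : Fintype.card F = p ^ d)
    (G : Subgroup (Equiv.Perm F))
    (hAGL : ∀ σ ∈ G, ∃ a : F, a ≠ 0 ∧ ∃ b : F, ∀ t : F, σ t = a * t + b)
    (hT : ∀ b : F, Equiv.addLeft b ∈ G)
    (hprim : IsPrimitiveAction ↥G F)
    (x : ↥G) (hx : Subgroup.zpowers x = stabilizer ↥G (0 : F)) :
    ∀ y : ↥G, y ∉ stabilizer ↥G (0 : F) →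
      Subgroup.closure ({x, y} : Set ↥G) = ⊤ := by
  intro y hy
  set H : Subgroup ↥G := Subgroup.closure ({x, y} : Set ↥G) with hH
  have hxH : x ∈ H := Subgroup.subset_closure (by simp)
  have hyH : y ∈ H := Subgroup.subset_closure (by simp)
  have hstab : stabilizer ↥G (0 : F) ≤ H := by
    rw [← hx]
    rintro g ⟨n, rfl⟩
    exact zpow_mem hxH n
  have hblock : IsBlock ↥G (orbit H (0 : F)) := IsBlock.of_orbit hstab
  rcases hprim.2 _ hblock with h | h
  · exfalso
    have h0 : (0 : F) ∈ orbit H (0 : F) := mem_orbit_self 0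
    have hy0 : y • (0 : F) ∈ orbit H (0 : F) := ⟨⟨y, hyH⟩, rfl⟩
    exact hy (h hy0 h0)
  · have := stabilizer_orbit_eq hstab
    rw [h] at this
    rw [← this]
    ext g
    simp [mem_stabilizer_iff]
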